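/- In a partial group L, if u ∈ D(L) and u = u^{-1}, then for every natural number k, u^k ∈ D(L) and Π(u^k) = Π(Π(u)^k), where u^k denotes the concatenation of k copies of u. -/

import Mathlib

universe u v

/-- A partial group: a set `L` with a domain `D ⊆ W(L)` of words, a (total extension of the)
partial product `Pi`, and an involutory inversion, satisfying axioms (PG1)-(PG4).
The value of `Pi` outside `D` is irrelevant. -/
structure PartialGroup (L : Type u) : Type u where
  D : Set (List L)
  Pi : List L → L
  inv : L → L
  inv_inv : ∀ g, inv (inv g) = g
  singleton_mem : ∀ g, [g] ∈ D
  append_left_mem : ∀ {u v : List L}, u ++ v ∈ D → u ∈ D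
  append_right_mem : ∀ {u v : List L}, u ++ v ∈ D → v ∈ D
  Pi_singleton : ∀ g, Pi [g] = g
  pg3_mem : ∀ u v w : List L, u ++ v ++ w ∈ D → u ++ [Pi v] ++ w ∈ D
  pg3_eq : ∀ u v w : List L, u ++ v ++ w ∈ D → Pi (u ++ v ++ w) = Pi (u ++ [Pi v] ++ w)
  pg4_mem : ∀ w ∈ D, (List.map inv w).reverse ++ w ∈ D
  pg4_eq : ∀ w ∈ D, Pi ((List.map inv w).reverse ++ w) = Pi []

namespace PartialGroup

variable {L : Type u} {L' : Type v}

/-- Inversion of a word: `(g_1,...,g_k)⁻¹ = (g_k⁻¹,...,g_1⁻¹)`. -/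
def wInv (P : PartialGroup L) (w : List L) : List L := (w.map P.inv).reverse

/-- The identity `1 = Π(∅)`. -/
def one (P : PartialGroup L) : L := P.Pi []

/-- Conjugation `x^g = Π(g⁻¹, x, g)`. -/
def cnj (P : PartialGroup L) (g x : L) : L := P.Pi [P.inv g, x, g]

/-- `x ∈ D(g)`, i.e. `(g⁻¹, x, g) ∈ D(L)`. -/
def memD (P : PartialGroup L) (g x : L) : Prop := [P.inv g, x, g] ∈ P.D

/-- `H` is a partial subgroup of `L`. -/
def IsPartialSubgroup (P : PartialGroup L) (H : Set L) : Prop :=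
  H.Nonempty ∧ (∀ g ∈ H, P.inv g ∈ H) ∧ ∀ w ∈ P.D, (∀ x ∈ w, x ∈ H) → P.Pi w ∈ H

/-- `N` is a partial normal subgroup of `L`. -/
def IsPartialNormal (P : PartialGroup L) (N : Set L) : Prop :=
  P.IsPartialSubgroup N ∧ ∀ g : L, ∀ n ∈ N, P.memD g n → P.cnj g n ∈ N

/-- `H` is a subgroup of `L`: a partial subgroup with `W(H) ⊆ D(L)`. -/
def IsSubgroup (P : PartialGroup L) (H : Set L) : Prop :=
  P.IsPartialSubgroup H ∧ ∀ w : List L, (∀ x ∈ w, x ∈ H) → w ∈ P.D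

/-- Homomorphism of partial groups. -/
def IsHom (P : PartialGroup L) (P' : PartialGroup L') (φ : L → L') : Prop :=
  ∀ w ∈ P.D, w.map φ ∈ P'.D ∧ φ (P.Pi w) = P'.Pi (w.map φ)

/-- Isomorphism of partial groups: a bijective homomorphism with `D(L)^φ = D(L')`. -/
def IsIso (P : PartialGroup L) (P' : PartialGroup L') (φ : L → L') : Prop :=
  Function.Bijective φ ∧ P.IsHom P' φ ∧ List.map φ '' P.D = P'.D

end PartialGroup

open PartialGroup

lemma aux_wInv_append {L : Type u} (P : PartialGroup L) (a b : List L) :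
    P.wInv (a ++ b) = P.wInv b ++ P.wInv a := by
  simp [wInv]

lemma aux_flatten_add {L : Type u} (u : List L) (a b : ℕ) :
    (List.replicate (a + b) u).flatten
      = (List.replicate a u).flatten ++ (List.replicate b u).flatten := by
  rw [List.replicate_add, List.flatten_append]

lemma aux_wInv_flatten {L : Type u} (P : PartialGroup L) (u : List L)
    (hself : P.wInv u = u) (k : ℕ) :
    P.wInv ((List.replicate k u).flatten) = (List.replicate k u).flatten := by
  induction k with
  | zero => simp [wInv]
  | succ n ih =>
    have h1 : (List.replicate n u).flatten ++ u = (List.replicate (n + 1) u).flatten := by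
      rw [List.replicate_succ', List.flatten_append]; simp
    have h2 : u ++ (List.replicate n u).flatten = (List.replicate (n + 1) u).flatten := by
      rw [List.replicate_succ, List.flatten_cons]
    rw [List.replicate_succ, List.flatten_cons, aux_wInv_append, ih, hself, h1, h2]

lemma aux_mem {L : Type u} (P : PartialGroup L) (u : List L) (hu : u ∈ P.D)
    (hself : P.wInv u = u) : ∀ k : ℕ, (List.replicate k u).flatten ∈ P.D := by
  intro k
  induction k with
  | zero =>
    have : ([] : List L) ++ u ∈ P.D := by simpa using hu
    simpa using P.append_left_mem this
  | succ n ih =>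
    match n, ih with
    | 0, _ => simpa using hu
    | (m + 1), ih =>
      have h2 := P.pg4_mem _ ih
      have hw := aux_wInv_flatten P u hself (m + 1)
      simp only [wInv] at hw
      rw [hw] at h2
      rw [← aux_flatten_add] at h2
      have heq : (m + 1) + (m + 1) = (m + 2) + m := by omega
      rw [heq, aux_flatten_add] at h2
      exact P.append_left_mem h2

lemma aux_collapse {L : Type u} (P : PartialGroup L) (u : List L) :
    ∀ (m j : ℕ),
      (List.replicate j (P.Pi u) ++ (List.replicate m u).flatten) ∈ P.D →
      P.Pi (List.replicate j (P.Pi u) ++ (List.replicate m u).flatten)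
        = P.Pi (List.replicate (j + m) (P.Pi u)) := by
  intro m
  induction m with
  | zero => intro j _; simp
  | succ n ih =>
    intro j h
    rw [List.replicate_succ, List.flatten_cons, ← List.append_assoc] at h ⊢
    have e1 := P.pg3_eq (List.replicate j (P.Pi u)) u ((List.replicate n u).flatten) h
    have m1 := P.pg3_mem (List.replicate j (P.Pi u)) u ((List.replicate n u).flatten) h
    have hr : List.replicate j (P.Pi u) ++ [P.Pi u]
        = List.replicate (j + 1) (P.Pi u) := List.replicate_succ'.symm
    rw [List.append_assoc, hr, ← List.append_assoc] at e1
    rw [hr] at m1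
    rw [e1, ih (j + 1) m1]
    have : j + 1 + n = j + (n + 1) := by omega
    rw [this]

theorem stmt2 {L : Type u} (P : PartialGroup L) (u : List L) (hu : u ∈ P.D)
    (hself : P.wInv u = u) (k : ℕ) :
    (List.replicate k u).flatten ∈ P.D ∧
      P.Pi ((List.replicate k u).flatten) = P.Pi (List.replicate k (P.Pi u)) := by
  have hmem := aux_mem P u hu hself k
  refine ⟨hmem, ?_⟩
  have := aux_collapse P u k 0 (by simpa using hmem)
  simpa using this
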